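/- Let λ, T₀, λ₁, λ₂ > 0, C' > 0, and define ρ : [0,∞) → ℝ by ρ(t) := 1/C' for 0 ≤ t ≤ T₀ and ρ(t) := λ₂ e^{−λ₁ t} for t > T₀. Then the following are equivalent: (I) ρ is a probability density (∫₀^∞ ρ(r) dr = 1) and F̄_ρ(r) ≥ e^{−λr} for all r ≥ 0; (II) the three conditions hold: T₀/C' + (λ₂/λ₁) e^{−λ₁ T₀} = 1, λ₁ ≤ λ, and T₀ ≤ (1 − e^{−λT₀}) C'. -/

import Mathlib

open Real MeasureTheory Set Filter

lemma exp_tail (a : ℝ) {b : ℝ} (hb : 0 < b) :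
    ∫ x in Ioi a, Real.exp (-(b * x)) = Real.exp (-(b * a)) / b := by
  have h : ∀ x ∈ Ici a, HasDerivAt (fun x => -Real.exp (-(b*x)) / b)
      (Real.exp (-(b * x))) x := by
    intro x _
    have : HasDerivAt (fun x => -(b*x)) (-b) x := by
      simpa using (hasDerivAt_neg x).const_mul b
    have := (this.exp).neg.div_const b
    simpa [mul_comm, mul_div_assoc, hb.ne'] using this
  have ht : Tendsto (fun x => -Real.exp (-(b*x)) / b) atTop (nhds 0) := by
    have : Tendsto (fun x : ℝ => Real.exp (-(b*x))) atTop (nhds 0) := by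
      have h1 : Tendsto (fun x : ℝ => b * x) atTop atTop :=
        Tendsto.const_mul_atTop hb tendsto_id
      exact Real.tendsto_exp_atBot.comp (tendsto_neg_atTop_atBot.comp h1)
    simpa using (this.neg.div_const b)
  have := MeasureTheory.integral_Ioi_of_hasDerivAt_of_tendsto'
    (f := fun x => -Real.exp (-(b*x)) / b) (f' := fun x => Real.exp (-(b*x)))
    h (by simpa [neg_mul] using exp_neg_integrableOn_Ioi a hb) ht
  rw [this]; ring

lemma tail_hi (T₀ lam₁ lam₂ C' r : ℝ) (h₁ : 0 < lam₁) (hr : T₀ ≤ r) :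
    (∫ s in Ioi r, (if s ≤ T₀ then 1 / C' else lam₂ * Real.exp (-(lam₁ * s))))
      = lam₂ / lam₁ * Real.exp (-(lam₁ * r)) := by
  rw [setIntegral_congr_fun measurableSet_Ioi
    (g := fun s => lam₂ * Real.exp (-(lam₁ * s)))
    (fun s hs => by rw [if_neg (by simp only [mem_Ioi] at hs; linarith)]),
    integral_const_mul, exp_tail r h₁]
  ring

lemma tail_lo (T₀ lam₁ lam₂ C' r : ℝ) (h₁ : 0 < lam₁) (hr : r ≤ T₀) :
    (∫ s in Ioi r, (if s ≤ T₀ then 1 / C' else lam₂ * Real.exp (-(lam₁ * s))))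
      = (T₀ - r) / C' + lam₂ / lam₁ * Real.exp (-(lam₁ * T₀)) := by
  have hsplit : Ioc r T₀ ∪ Ioi T₀ = Ioi r := Ioc_union_Ioi_eq_Ioi hr
  have hint1 : IntegrableOn (fun s => if s ≤ T₀ then 1 / C' else lam₂ * Real.exp (-(lam₁ * s)))
      (Ioc r T₀) := by
    apply (integrableOn_const (C := 1 / C') measure_Ioc_lt_top.ne).congr_fun
      (fun s hs => by rw [if_pos hs.2]) measurableSet_Ioc
  have hint2 : IntegrableOn (fun s => if s ≤ T₀ then 1 / C' else lam₂ * Real.exp (-(lam₁ * s)))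
      (Ioi T₀) := by
    have base : IntegrableOn (fun s => lam₂ * Real.exp (-(lam₁ * s))) (Ioi T₀) := by
      have := (exp_neg_integrableOn_Ioi T₀ h₁).const_mul lam₂; simp only [neg_mul] at this; exact this
    apply base.congr_fun (fun s hs => ?_) measurableSet_Ioi
    simp only [mem_Ioi] at hs
    rw [if_neg (by linarith)]
  rw [← hsplit, setIntegral_union (Ioc_disjoint_Ioi le_rfl) measurableSet_Ioi hint1 hint2]
  have e1 : (∫ s in Ioc r T₀, (if s ≤ T₀ then 1 / C' else lam₂ * Real.exp (-(lam₁ * s))))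
      = (T₀ - r) / C' := by
    rw [setIntegral_congr_fun measurableSet_Ioc (g := fun _ => 1 / C')
      (fun s hs => by rw [if_pos hs.2]), setIntegral_const, measureReal_def, Real.volume_Ioc, smul_eq_mul]
    rcases le_or_gt T₀ r with h | h
    · rw [ENNReal.toReal_ofReal_eq_iff.2]
      · ring
      · linarith [le_antisymm h hr]
    · rw [ENNReal.toReal_ofReal (by linarith)]; ring
  have e2 : (∫ s in Ioi T₀, (if s ≤ T₀ then 1 / C' else lam₂ * Real.exp (-(lam₁ * s))))
      = lam₂ / lam₁ * Real.exp (-(lam₁ * T₀)) := tail_hi T₀ lam₁ lam₂ C' T₀ h₁ le_rfl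
  rw [e1, e2]

/-- For the piecewise lifetime density `ρ(t) = 1/C'` on `[0,T₀]`,
`ρ(t) = λ₂ e^{−λ₁ t}` for `t > T₀`, being a probability density whose tail dominates
`e^{−λr}` is equivalent to the three conditions
`T₀/C' + (λ₂/λ₁) e^{−λ₁T₀} = 1`, `λ₁ ≤ λ` and `T₀ ≤ (1 − e^{−λT₀}) C'`. -/
theorem stmt_7 (lam T₀ lam₁ lam₂ C' : ℝ) (hlam : 0 < lam) (hT₀ : 0 < T₀)
    (h₁ : 0 < lam₁) (h₂ : 0 < lam₂) (hC : 0 < C') :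
    (((∫ r in Set.Ioi (0:ℝ),
        (if r ≤ T₀ then 1 / C' else lam₂ * Real.exp (-(lam₁ * r)))) = 1) ∧
      (∀ r : ℝ, 0 ≤ r → Real.exp (-(lam * r)) ≤
        ∫ s in Set.Ioi r, (if s ≤ T₀ then 1 / C' else lam₂ * Real.exp (-(lam₁ * s))))) ↔
    (T₀ / C' + lam₂ / lam₁ * Real.exp (-(lam₁ * T₀)) = 1 ∧ lam₁ ≤ lam ∧
      T₀ ≤ (1 - Real.exp (-(lam * T₀))) * C') := by
  constructor
  · rintro ⟨hnorm, htail⟩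
    rw [tail_lo T₀ lam₁ lam₂ C' 0 h₁ hT₀.le, sub_zero] at hnorm
    have hTt := htail T₀ hT₀.le
    rw [tail_hi T₀ lam₁ lam₂ C' T₀ h₁ le_rfl] at hTt
    refine ⟨hnorm, ?_, ?_⟩
    · by_contra hcon
      push_neg at hcon
      set r := max T₀ (lam₂ / lam₁ / (lam₁ - lam)) with hrdef
      have hrT : T₀ ≤ r := le_max_left _ _
      have hr0 : 0 ≤ r := le_trans hT₀.le hrT
      have hr := htail r hr0
      rw [tail_hi T₀ lam₁ lam₂ C' r h₁ hrT] at hr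
      -- exp((lam₁-lam)*r) ≤ lam₂/lam₁
      have hkey : Real.exp ((lam₁ - lam) * r) ≤ lam₂ / lam₁ := by
        have := mul_le_mul_of_nonneg_right hr (Real.exp_pos (lam₁ * r)).le
        rw [← Real.exp_add] at this
        rw [mul_assoc, ← Real.exp_add] at this
        have e : -(lam₁ * r) + lam₁ * r = 0 := by ring
        rw [e, Real.exp_zero, mul_one] at this; rw [sub_mul, sub_eq_add_neg, add_comm]; exact this
      have hlin : (lam₁ - lam) * r + 1 ≤ Real.exp ((lam₁ - lam) * r) :=
        Real.add_one_le_exp _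
      have hrge : lam₂ / lam₁ / (lam₁ - lam) ≤ r := le_max_right _ _
      have hmul : lam₂ / lam₁ ≤ (lam₁ - lam) * r := by
        rw [div_le_iff₀ (by linarith) ] at hrge
        linarith [hrge]
      linarith
    · have h6 : T₀ / C' ≤ 1 - Real.exp (-(lam * T₀)) := by linarith
      have h7 : T₀ / C' * C' = T₀ := div_mul_cancel₀ T₀ hC.ne'
      calc T₀ = T₀ / C' * C' := h7.symm
        _ ≤ (1 - Real.exp (-(lam * T₀))) * C' :=
          mul_le_mul_of_nonneg_right h6 hC.le
  · rintro ⟨c1, c2, c3⟩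
    have hTC : T₀ / C' ≤ 1 - Real.exp (-(lam * T₀)) := by
      rw [div_le_iff₀ hC]; linarith
    have hK : Real.exp (-(lam * T₀)) ≤ lam₂ / lam₁ * Real.exp (-(lam₁ * T₀)) := by
      nlinarith [hTC, c1]
    constructor
    · rw [tail_lo T₀ lam₁ lam₂ C' 0 h₁ hT₀.le, sub_zero]; exact c1
    · intro r hr0
      rcases le_or_gt r T₀ with hrT | hrT
      · rw [tail_lo T₀ lam₁ lam₂ C' r h₁ hrT]
        set t := r / T₀ with htdef
        have ht0 : 0 ≤ t := by positivity
        have ht1 : t ≤ 1 := by rw [htdef, div_le_one hT₀]; exact hrT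
        have htT : t * T₀ = r := div_mul_cancel₀ r hT₀.ne'
        have hconv := convexOn_exp.2 (Set.mem_univ (0:ℝ))
          (Set.mem_univ (-(lam * T₀))) (by linarith : (0:ℝ) ≤ 1 - t) ht0 (by ring)
        simp only [smul_eq_mul, mul_zero, zero_add, Real.exp_zero, mul_one] at hconv
        have harg : t * -(lam * T₀) = -(lam * r) := by
          rw [← htT]; ring
        rw [harg] at hconv
        -- hconv : exp (-(lam * r)) ≤ (1 - t) + t * exp (-(lam * T₀))
        have hstep : (1 - t) + t * Real.exp (-(lam * T₀)) ≤ 1 - r / C' := by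
          have h5 : r / C' ≤ t * (1 - Real.exp (-(lam * T₀))) := by
            have := mul_le_mul_of_nonneg_left hTC ht0
            calc r / C' = t * (T₀ / C') := by rw [← htT]; ring
              _ ≤ t * (1 - Real.exp (-(lam * T₀))) := this
          linarith
        have hfin : 1 - r / C' ≤ (T₀ - r) / C' + lam₂ / lam₁ * Real.exp (-(lam₁ * T₀)) := by
          have : (T₀ - r) / C' = T₀ / C' - r / C' := by ring
          rw [this]; linarith
        linarith
      · rw [tail_hi T₀ lam₁ lam₂ C' r h₁ hrT.le]
        have e1 : Real.exp (-(lam * r))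
            = Real.exp (-(lam * T₀)) * Real.exp (-(lam * (r - T₀))) := by
          rw [← Real.exp_add]; ring_nf
        have e2 : lam₂ / lam₁ * Real.exp (-(lam₁ * r))
            = (lam₂ / lam₁ * Real.exp (-(lam₁ * T₀))) * Real.exp (-(lam₁ * (r - T₀))) := by
          rw [mul_assoc, ← Real.exp_add]; ring_nf
        rw [e1, e2]
        apply mul_le_mul hK _ (Real.exp_pos _).le (by positivity)
        apply Real.exp_le_exp.2
        have : lam₁ * (r - T₀) ≤ lam * (r - T₀) :=
          mul_le_mul_of_nonneg_right c2 (by linarith)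
        linarith
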